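/- For every μ with 1/2 < μ ≤ 1, one has sup_{x ∈ [0,1]} |h_μ(x) − x| ≤ 1 − μ. Consequently, the one-parameter family {h_μ} converges uniformly to the identity function on [0,1] as μ → 1. -/
import Mathlib


open Set

/-- `h : [0,1] → [0,1]` satisfies the commuter functional equation for `T_μ`:
`h(x) = (1/2)·h(2μx)` for `0 ≤ x ≤ 1/2` and `h(x) = 1 - (1/2)·h(2μ(1-x))` for `1/2 < x ≤ 1`. -/
def IsCommuter (μ : ℝ) (h : ℝ → ℝ) : Prop :=
  (∀ x ∈ Icc (0:ℝ) 1, h x ∈ Icc (0:ℝ) 1) ∧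
  (∀ x : ℝ, 0 ≤ x → x ≤ 1/2 → h x = (1/2) * h (2*μ*x)) ∧
  (∀ x : ℝ, 1/2 < x → x ≤ 1 → h x = 1 - (1/2) * h (2*μ*(1-x)))

lemma commuter_pointwise (μ : ℝ) (hμ1 : 1/2 < μ) (hμ2 : μ ≤ 1) (h : ℝ → ℝ)
    (hc : IsCommuter μ h) : ∀ x ∈ Icc (0:ℝ) 1, |h x - x| ≤ 1 - μ := by
  obtain ⟨hmap, h1, h2⟩ := hc
  have key : ∀ n : ℕ, ∀ x ∈ Icc (0:ℝ) 1, |h x - x| ≤ (1 - μ) + (1/2)^n := by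
    intro n
    induction n with
    | zero =>
      intro x hx
      have hm := hmap x hx
      rw [abs_le]
      constructor <;> simp only [pow_zero] <;> nlinarith [hm.1, hm.2, hx.1, hx.2]
    | succ n ih =>
      intro x hx
      rcases le_or_gt x (1/2) with hxh | hxh
      · set y := 2*μ*x with hy
        have hyIcc : y ∈ Icc (0:ℝ) 1 := by
          constructor
          · nlinarith [hx.1]
          · nlinarith [hx.1]
        have hb := ih y hyIcc
        have heq : h x = (1/2) * h y := h1 x hx.1 hxh
        have : h x - x = (1/2) * (h y - y) + (μ - 1) * x := by
          rw [heq]; ring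
        rw [this, abs_le]
        rw [abs_le] at hb
        have hp : (1/2:ℝ)^(n+1) = (1/2) * (1/2)^n := by ring
        have hq1 : 0 ≤ (1 - μ) * x := mul_nonneg (by linarith) hx.1
        have hq2 : 0 ≤ (1 - μ) * (1/2 - x) := mul_nonneg (by linarith) (by linarith)
        constructor <;> linarith [hb.1, hb.2]
      · set y := 2*μ*(1-x) with hy
        have hyIcc : y ∈ Icc (0:ℝ) 1 := by
          constructor
          · nlinarith [hx.2]
          · nlinarith [hx.2]
        have hb := ih y hyIcc
        have heq : h x = 1 - (1/2) * h y := h2 x hxh hx.2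
        have : h x - x = -((1/2) * (h y - y)) + (1 - μ) * (1 - x) := by
          rw [heq]; ring
        rw [this, abs_le]
        rw [abs_le] at hb
        have hp : (1/2:ℝ)^(n+1) = (1/2) * (1/2)^n := by ring
        have hq1 : 0 ≤ (1 - μ) * (1 - x) := mul_nonneg (by linarith) (by linarith [hx.2])
        have hq2 : 0 ≤ (1 - μ) * (x - 1/2) := mul_nonneg (by linarith) (by linarith)
        constructor <;> linarith [hb.1, hb.2]
  intro x hx
  have htend : Filter.Tendsto (fun n : ℕ => (1 - μ) + (1/2:ℝ)^n) Filter.atTop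
      (nhds (1 - μ)) := by
    have := tendsto_pow_atTop_nhds_zero_of_lt_one (by norm_num : (0:ℝ) ≤ 1/2)
      (by norm_num : (1/2:ℝ) < 1)
    simpa using Filter.Tendsto.const_add (1 - μ) this
  exact ge_of_tendsto' htend (fun n => key n x hx)

/-- For `1/2 < μ ≤ 1`, `sup_{x ∈ [0,1]} |h_μ(x) - x| ≤ 1 - μ`; consequently the family
`{h_μ}` converges uniformly to the identity on `[0,1]` as `μ → 1`. -/
theorem commuter_tendsto_id :
    (∀ μ : ℝ, 1/2 < μ → μ ≤ 1 → ∀ h : ℝ → ℝ, IsCommuter μ h →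
      (⨆ x : Icc (0:ℝ) 1, |h (x:ℝ) - (x:ℝ)|) ≤ 1 - μ) ∧
    (∀ ε : ℝ, 0 < ε → ∃ δ : ℝ, 0 < δ ∧
      ∀ μ : ℝ, 1/2 < μ → μ ≤ 1 → |μ - 1| < δ →
        ∀ h : ℝ → ℝ, IsCommuter μ h → ∀ x ∈ Icc (0:ℝ) 1, |h x - x| < ε) := by
  constructor
  · intro μ hμ1 hμ2 h hc
    haveI : Nonempty (Icc (0:ℝ) 1) := ⟨⟨0, by norm_num⟩⟩
    exact ciSup_le fun x => commuter_pointwise μ hμ1 hμ2 h hc x x.2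
  · intro ε hε
    refine ⟨ε, hε, fun μ hμ1 hμ2 hμδ h hc x hx => ?_⟩
    have h1 := commuter_pointwise μ hμ1 hμ2 h hc x hx
    have : 1 - μ ≤ |μ - 1| := by
      rw [abs_sub_comm]; exact le_abs_self _
    linarith
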